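/- Key sign computation in the monotonicity proof: with notation as in the background transonic shock, define $I = \big(\gamma(\bar\rho^+(L_s))^{\gamma-2} - \frac{J^2}{(\bar\rho^+(L_s))^3}\big)\frac{d\bar\rho^+(L_s)}{dL_s} - \bar f(L_s)$. Then $I = \frac{\bar f(L_s)\,(\bar u^+(L_s)-\bar u^-(L_s))}{\bar u^-(L_s)} < 0$, using the derivative relation $\big(1-\frac{\gamma J^{\gamma-1}}{(\bar u^\pm(L_s))^{\gamma+1}}\big)\frac{d\bar u^\pm(L_s)}{dL_s} = \frac{\bar f(L_s)}{\bar u^-(L_s)}$ and $\bar u^+(L_s)<\bar u^-(L_s)$, $\bar f(L_s)>0$. -/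

import Mathlib

/-- key sign computation in the monotonicity proof.  With the
shock states `u⁻ = um Ls`, `u⁺ = up Ls`, densities `ρ⁺ = J/u⁺` regarded as
differentiable functions of the shock position, the derivative relation
`(1 - γ J^(γ-1)/(u^±)^(γ+1)) d u^±/dLs = f(Ls)/u⁻` from the Rankine–Hugoniot
condition, together with `u⁺ < u⁻` and `f(Ls) > 0`, gives
`I = (γ (ρ⁺)^(γ-2) - J²/(ρ⁺)³) dρ⁺/dLs - f(Ls) = f(Ls)(u⁺ - u⁻)/u⁻ < 0`. -/
theorem stmt6 (γ J Ls : ℝ) (hγ : 1 < γ) (hJ : 0 < J)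
    (um up ρp f : ℝ → ℝ)
    (hum : DifferentiableAt ℝ um Ls) (hup : DifferentiableAt ℝ up Ls)
    (hρp : DifferentiableAt ℝ ρp Ls)
    (hpos : ∀ s, 0 < up s ∧ 0 < um s)
    (hmass : ∀ s, ρp s * up s = J)
    (hlt : up Ls < um Ls) (hf : 0 < f Ls)
    (hsub : (up Ls) ^ (γ + 1) < γ * J ^ (γ - 1))
    (hsup : γ * J ^ (γ - 1) < (um Ls) ^ (γ + 1))
    (hderup : (1 - γ * J ^ (γ - 1) / (up Ls) ^ (γ + 1)) * deriv up Ls = f Ls / um Ls)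
    (hderum : (1 - γ * J ^ (γ - 1) / (um Ls) ^ (γ + 1)) * deriv um Ls = f Ls / um Ls) :
    (γ * (ρp Ls) ^ (γ - 2) - J ^ 2 / (ρp Ls) ^ 3) * deriv ρp Ls - f Ls =
      f Ls * (up Ls - um Ls) / um Ls ∧
    (γ * (ρp Ls) ^ (γ - 2) - J ^ 2 / (ρp Ls) ^ 3) * deriv ρp Ls - f Ls < 0 := by
  obtain ⟨hu, hm⟩ := hpos Ls
  have huL : up Ls ≠ 0 := hu.ne'
  have hmne : um Ls ≠ 0 := hm.ne'
  have hρeq : ρp = fun s => J / up s := by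
    funext s
    have h1 := hmass s
    have h2 : up s ≠ 0 := (hpos s).1.ne'
    field_simp
    linarith
  have hd : deriv ρp Ls = -(J * deriv up Ls) / (up Ls) ^ 2 := by
    rw [hρeq]
    have h : deriv (fun s => J / up s) Ls = (0 * up Ls - J * deriv up Ls) / up Ls ^ 2 :=
      ((hasDerivAt_const Ls J).div hup.hasDerivAt huL).deriv
    rw [h]; ring
  have hρL : ρp Ls = J / up Ls := by rw [hρeq]
  set u := up Ls with hudef
  set u' := deriv up Ls with hu'def
  have e1 : (J / u) ^ (γ - 2) = J ^ (γ - 2) / u ^ (γ - 2) :=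
    Real.div_rpow hJ.le hu.le _
  have e2 : J ^ (γ - 1) = J ^ (γ - 2) * J := by
    rw [← Real.rpow_add_one hJ.ne']; ring_nf
  have e3 : u ^ (γ + 1) = u ^ (γ - 2) * u ^ (3 : ℕ) := by
    rw [← Real.rpow_natCast u 3, ← Real.rpow_add hu]; push_cast; ring_nf
  have e4 : (0:ℝ) < u ^ (γ - 2) := Real.rpow_pos_of_pos hu _
  have e5 : (0:ℝ) < J ^ (γ - 2) := Real.rpow_pos_of_pos hJ _
  have key : (γ * (J / u) ^ (γ - 2) - J ^ 2 / (J / u) ^ 3) * (-(J * u') / u ^ 2)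
      = (1 - γ * J ^ (γ - 1) / u ^ (γ + 1)) * u' * u := by
    rw [e1, e2, e3]
    field_simp
    ring
  have main : (γ * (ρp Ls) ^ (γ - 2) - J ^ 2 / (ρp Ls) ^ 3) * deriv ρp Ls - f Ls =
      f Ls * (u - um Ls) / um Ls := by
    rw [hρL, hd, key, hderup]
    field_simp
  refine ⟨main, ?_⟩
  rw [main]
  exact div_neg_of_neg_of_pos (mul_neg_of_pos_of_neg hf (by linarith)) hm
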